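/- Let G be a triangle-free simple graph on 7 vertices containing a cycle C of length 5, and let w1, w2 be the two vertices not on C. If each of w1 and w2 has exactly 2 neighbors on C, then G has a spanning closed trail (a closed walk traversing each of its edges at most once) that contains all edges between {w1, w2} and C. -/
import Mathlib
open SimpleGraph

set_option maxHeartbeats 1000000 in
lemma trailA (G : SimpleGraph (Fin 7)) (v0 v1 v2 v3 v4 w1 w2 : Fin 7)
    (hnd : List.Nodup [v0,v1,v2,v3,v4,w1,w2])
    (hcov : ∀ x : Fin 7, x = v0 ∨ x = v1 ∨ x = v2 ∨ x = v3 ∨ x = v4 ∨ x = w1 ∨ x = w2)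
    (c0 : G.Adj v0 v1) (c1 : G.Adj v1 v2) (c2 : G.Adj v2 v3) (c3 : G.Adj v3 v4) (c4 : G.Adj v4 v0)
    (e1 : G.Adj w1 v0) (e2 : G.Adj w1 v2) (f1 : G.Adj w2 v0) (f2 : G.Adj w2 v2) :
    ∃ (t0 : Fin 7) (t : G.Walk t0 t0), t.IsTrail ∧ (∀ x, x ∈ t.support) ∧
      s(w1,v0) ∈ t.edges ∧ s(w1,v2) ∈ t.edges ∧ s(w2,v0) ∈ t.edges ∧ s(w2,v2) ∈ t.edges := by
  refine ⟨v0, Walk.cons e1.symm (.cons e2 (.cons f2.symm (.cons f1 (.cons c0 (.cons c1 (.cons c2 (.cons c3 (.cons c4 .nil)))))))), ?_, ?_, ?_, ?_, ?_, ?_⟩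
  · simp only [List.nodup_cons, List.mem_cons, List.not_mem_nil, List.mem_singleton, or_false, not_or] at hnd
    clear hcov
    simp [Walk.isTrail_def, Sym2.eq, Sym2.rel_iff']
    tauto
  · intro x
    rcases hcov x with rfl|rfl|rfl|rfl|rfl|rfl|rfl <;> simp [Walk.support_cons]
  · simp [Sym2.eq_swap]
  · simp [Sym2.eq_swap]
  · simp [Sym2.eq_swap]
  · simp [Sym2.eq_swap]

set_option maxHeartbeats 1000000 in
lemma trailB (G : SimpleGraph (Fin 7)) (v0 v1 v2 v3 v4 w1 w2 : Fin 7)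
    (hnd : List.Nodup [v0,v1,v2,v3,v4,w1,w2])
    (hcov : ∀ x : Fin 7, x = v0 ∨ x = v1 ∨ x = v2 ∨ x = v3 ∨ x = v4 ∨ x = w1 ∨ x = w2)
    (c0 : G.Adj v0 v1) (c1 : G.Adj v1 v2) (c2 : G.Adj v2 v3) (c3 : G.Adj v3 v4) (c4 : G.Adj v4 v0)
    (e1 : G.Adj w1 v0) (e2 : G.Adj w1 v2) (f1 : G.Adj w2 v2) (f2 : G.Adj w2 v4) :
    ∃ (t0 : Fin 7) (t : G.Walk t0 t0), t.IsTrail ∧ (∀ x, x ∈ t.support) ∧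
      s(w1,v0) ∈ t.edges ∧ s(w1,v2) ∈ t.edges ∧ s(w2,v2) ∈ t.edges ∧ s(w2,v4) ∈ t.edges := by
  refine ⟨v0, Walk.cons e1.symm (.cons e2 (.cons f1.symm (.cons f2 (.cons c3.symm (.cons c2.symm (.cons c1.symm (.cons c0.symm .nil))))))), ?_, ?_, ?_, ?_, ?_, ?_⟩
  · simp only [List.nodup_cons, List.mem_cons, List.not_mem_nil, List.mem_singleton, or_false, not_or] at hnd
    clear hcov
    simp [Walk.isTrail_def, Sym2.eq, Sym2.rel_iff']
    tauto
  · intro x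
    rcases hcov x with rfl|rfl|rfl|rfl|rfl|rfl|rfl <;> simp [Walk.support_cons]
  · simp [Sym2.eq_swap]
  · simp [Sym2.eq_swap]
  · simp [Sym2.eq_swap]
  · simp [Sym2.eq_swap]

set_option maxHeartbeats 1000000 in
lemma trailC (G : SimpleGraph (Fin 7)) (v0 v1 v2 v3 v4 w1 w2 : Fin 7)
    (hnd : List.Nodup [v0,v1,v2,v3,v4,w1,w2])
    (hcov : ∀ x : Fin 7, x = v0 ∨ x = v1 ∨ x = v2 ∨ x = v3 ∨ x = v4 ∨ x = w1 ∨ x = w2)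
    (c0 : G.Adj v0 v1) (c1 : G.Adj v1 v2) (c2 : G.Adj v2 v3) (c3 : G.Adj v3 v4) (c4 : G.Adj v4 v0)
    (e1 : G.Adj w1 v0) (e2 : G.Adj w1 v2) (f1 : G.Adj w2 v1) (f2 : G.Adj w2 v3) :
    ∃ (t0 : Fin 7) (t : G.Walk t0 t0), t.IsTrail ∧ (∀ x, x ∈ t.support) ∧
      s(w1,v0) ∈ t.edges ∧ s(w1,v2) ∈ t.edges ∧ s(w2,v1) ∈ t.edges ∧ s(w2,v3) ∈ t.edges := by
  refine ⟨v0, Walk.cons e1.symm (.cons e2 (.cons c1.symm (.cons f1.symm (.cons f2 (.cons c3 (.cons c4 .nil)))))), ?_, ?_, ?_, ?_, ?_, ?_⟩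
  · simp only [List.nodup_cons, List.mem_cons, List.not_mem_nil, List.mem_singleton, or_false, not_or] at hnd
    clear hcov
    simp [Walk.isTrail_def, Sym2.eq, Sym2.rel_iff']
    tauto
  · intro x
    rcases hcov x with rfl|rfl|rfl|rfl|rfl|rfl|rfl <;> simp [Walk.support_cons]
  · simp [Sym2.eq_swap]
  · simp [Sym2.eq_swap]
  · simp [Sym2.eq_swap]
  · simp [Sym2.eq_swap]

set_option maxHeartbeats 1000000 in
lemma trailD (G : SimpleGraph (Fin 7)) (v0 v1 v2 v3 v4 w1 w2 : Fin 7)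
    (hnd : List.Nodup [v0,v1,v2,v3,v4,w1,w2])
    (hcov : ∀ x : Fin 7, x = v0 ∨ x = v1 ∨ x = v2 ∨ x = v3 ∨ x = v4 ∨ x = w1 ∨ x = w2)
    (c0 : G.Adj v0 v1) (c1 : G.Adj v1 v2) (c2 : G.Adj v2 v3) (c3 : G.Adj v3 v4) (c4 : G.Adj v4 v0)
    (e1 : G.Adj w1 v0) (e2 : G.Adj w1 v2) (f1 : G.Adj w2 v3) (f2 : G.Adj w2 v0) :
    ∃ (t0 : Fin 7) (t : G.Walk t0 t0), t.IsTrail ∧ (∀ x, x ∈ t.support) ∧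
      s(w1,v0) ∈ t.edges ∧ s(w1,v2) ∈ t.edges ∧ s(w2,v3) ∈ t.edges ∧ s(w2,v0) ∈ t.edges := by
  refine ⟨v2, Walk.cons e2.symm (.cons e1 (.cons f2.symm (.cons f1 (.cons c3 (.cons c4 (.cons c0 (.cons c1 .nil))))))), ?_, ?_, ?_, ?_, ?_, ?_⟩
  · simp only [List.nodup_cons, List.mem_cons, List.not_mem_nil, List.mem_singleton, or_false, not_or] at hnd
    clear hcov
    simp [Walk.isTrail_def, Sym2.eq, Sym2.rel_iff']
    tauto
  · intro x
    rcases hcov x with rfl|rfl|rfl|rfl|rfl|rfl|rfl <;> simp [Walk.support_cons]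
  · simp [Sym2.eq_swap]
  · simp [Sym2.eq_swap]
  · simp [Sym2.eq_swap]
  · simp [Sym2.eq_swap]

set_option maxHeartbeats 1000000 in
lemma trailE (G : SimpleGraph (Fin 7)) (v0 v1 v2 v3 v4 w1 w2 : Fin 7)
    (hnd : List.Nodup [v0,v1,v2,v3,v4,w1,w2])
    (hcov : ∀ x : Fin 7, x = v0 ∨ x = v1 ∨ x = v2 ∨ x = v3 ∨ x = v4 ∨ x = w1 ∨ x = w2)
    (c0 : G.Adj v0 v1) (c1 : G.Adj v1 v2) (c2 : G.Adj v2 v3) (c3 : G.Adj v3 v4) (c4 : G.Adj v4 v0)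
    (e1 : G.Adj w1 v0) (e2 : G.Adj w1 v2) (f1 : G.Adj w2 v4) (f2 : G.Adj w2 v1) :
    ∃ (t0 : Fin 7) (t : G.Walk t0 t0), t.IsTrail ∧ (∀ x, x ∈ t.support) ∧
      s(w1,v0) ∈ t.edges ∧ s(w1,v2) ∈ t.edges ∧ s(w2,v4) ∈ t.edges ∧ s(w2,v1) ∈ t.edges := by
  refine ⟨v2, Walk.cons e2.symm (.cons e1 (.cons c0 (.cons f2.symm (.cons f1 (.cons c3.symm (.cons c2.symm .nil)))))), ?_, ?_, ?_, ?_, ?_, ?_⟩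
  · simp only [List.nodup_cons, List.mem_cons, List.not_mem_nil, List.mem_singleton, or_false, not_or] at hnd
    clear hcov
    simp [Walk.isTrail_def, Sym2.eq, Sym2.rel_iff']
    tauto
  · intro x
    rcases hcov x with rfl|rfl|rfl|rfl|rfl|rfl|rfl <;> simp [Walk.support_cons]
  · simp [Sym2.eq_swap]
  · simp [Sym2.eq_swap]
  · simp [Sym2.eq_swap]
  · simp [Sym2.eq_swap]
lemma tri {G : SimpleGraph (Fin 7)} (htf : G.CliqueFree 3) {a b c : Fin 7}
    (hab : G.Adj a b) (hbc : G.Adj b c) (hca : G.Adj a c) : False :=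
  htf {a,b,c} (by rw [is3Clique_triple_iff]; exact ⟨hab, hca, hbc⟩)

set_option maxHeartbeats 1000000 in
lemma layer2 (G : SimpleGraph (Fin 7)) (htf : G.CliqueFree 3)
    (v0 v1 v2 v3 v4 w1 w2 a2 b2 : Fin 7)
    (hnd : List.Nodup [v0,v1,v2,v3,v4,w1,w2])
    (hcov : ∀ x : Fin 7, x = v0 ∨ x = v1 ∨ x = v2 ∨ x = v3 ∨ x = v4 ∨ x = w1 ∨ x = w2)
    (c0 : G.Adj v0 v1) (c1 : G.Adj v1 v2) (c2 : G.Adj v2 v3) (c3 : G.Adj v3 v4) (c4 : G.Adj v4 v0)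
    (e1 : G.Adj w1 v0) (e2 : G.Adj w1 v2)
    (ma : a2 = v0 ∨ a2 = v1 ∨ a2 = v2 ∨ a2 = v3 ∨ a2 = v4)
    (mb : b2 = v0 ∨ b2 = v1 ∨ b2 = v2 ∨ b2 = v3 ∨ b2 = v4)
    (hne2 : a2 ≠ b2) (f1 : G.Adj w2 a2) (f2 : G.Adj w2 b2) :
    ∃ (t0 : Fin 7) (t : G.Walk t0 t0), t.IsTrail ∧ (∀ x, x ∈ t.support) ∧
      s(w1,v0) ∈ t.edges ∧ s(w1,v2) ∈ t.edges ∧ s(w2,a2) ∈ t.edges ∧ s(w2,b2) ∈ t.edges := by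
  rcases ma with rfl|rfl|rfl|rfl|rfl <;> rcases mb with rfl|rfl|rfl|rfl|rfl
  · exact absurd rfl hne2
  · exact (tri htf f1 c0 f2).elim
  · obtain ⟨t0,t,h1,h2,h3,h4,h5,h6⟩ := trailA G _ _ _ _ _ _ _ hnd hcov c0 c1 c2 c3 c4 e1 e2 f1 f2
    exact ⟨t0,t,h1,h2,h3,h4,h5,h6⟩
  · obtain ⟨t0,t,h1,h2,h3,h4,h5,h6⟩ := trailD G _ _ _ _ _ _ _ hnd hcov c0 c1 c2 c3 c4 e1 e2 f2 f1
    exact ⟨t0,t,h1,h2,h3,h4,h6,h5⟩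
  · exact (tri htf f2 c4 f1).elim
  · exact (tri htf f2 c0 f1).elim
  · exact absurd rfl hne2
  · exact (tri htf f1 c1 f2).elim
  · obtain ⟨t0,t,h1,h2,h3,h4,h5,h6⟩ := trailC G _ _ _ _ _ _ _ hnd hcov c0 c1 c2 c3 c4 e1 e2 f1 f2
    exact ⟨t0,t,h1,h2,h3,h4,h5,h6⟩
  · obtain ⟨t0,t,h1,h2,h3,h4,h5,h6⟩ := trailE G _ _ _ _ _ _ _ hnd hcov c0 c1 c2 c3 c4 e1 e2 f2 f1
    exact ⟨t0,t,h1,h2,h3,h4,h6,h5⟩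
  · obtain ⟨t0,t,h1,h2,h3,h4,h5,h6⟩ := trailA G _ _ _ _ _ _ _ hnd hcov c0 c1 c2 c3 c4 e1 e2 f2 f1
    exact ⟨t0,t,h1,h2,h3,h4,h6,h5⟩
  · exact (tri htf f2 c1 f1).elim
  · exact absurd rfl hne2
  · exact (tri htf f1 c2 f2).elim
  · obtain ⟨t0,t,h1,h2,h3,h4,h5,h6⟩ := trailB G _ _ _ _ _ _ _ hnd hcov c0 c1 c2 c3 c4 e1 e2 f1 f2
    exact ⟨t0,t,h1,h2,h3,h4,h5,h6⟩
  · obtain ⟨t0,t,h1,h2,h3,h4,h5,h6⟩ := trailD G _ _ _ _ _ _ _ hnd hcov c0 c1 c2 c3 c4 e1 e2 f1 f2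
    exact ⟨t0,t,h1,h2,h3,h4,h5,h6⟩
  · obtain ⟨t0,t,h1,h2,h3,h4,h5,h6⟩ := trailC G _ _ _ _ _ _ _ hnd hcov c0 c1 c2 c3 c4 e1 e2 f2 f1
    exact ⟨t0,t,h1,h2,h3,h4,h6,h5⟩
  · exact (tri htf f2 c2 f1).elim
  · exact absurd rfl hne2
  · exact (tri htf f1 c3 f2).elim
  · exact (tri htf f1 c4 f2).elim
  · obtain ⟨t0,t,h1,h2,h3,h4,h5,h6⟩ := trailE G _ _ _ _ _ _ _ hnd hcov c0 c1 c2 c3 c4 e1 e2 f1 f2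
    exact ⟨t0,t,h1,h2,h3,h4,h5,h6⟩
  · obtain ⟨t0,t,h1,h2,h3,h4,h5,h6⟩ := trailB G _ _ _ _ _ _ _ hnd hcov c0 c1 c2 c3 c4 e1 e2 f2 f1
    exact ⟨t0,t,h1,h2,h3,h4,h6,h5⟩
  · exact (tri htf f2 c3 f1).elim
  · exact absurd rfl hne2
set_option maxHeartbeats 2000000 in
theorem stmt_0 (G : SimpleGraph (Fin 7)) (htf : G.CliqueFree 3)
    {v : Fin 7} (c : G.Walk v v) (hc : c.IsCycle) (hlen : c.length = 5)
    (w1 w2 : Fin 7) (hw : w1 ≠ w2)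
    (hout : ∀ x : Fin 7, x ∉ c.support ↔ (x = w1 ∨ x = w2))
    (hn1 : {u | u ∈ c.support ∧ G.Adj w1 u}.ncard = 2)
    (hn2 : {u | u ∈ c.support ∧ G.Adj w2 u}.ncard = 2) :
    ∃ (t0 : Fin 7) (t : G.Walk t0 t0), t.IsTrail ∧ (∀ x : Fin 7, x ∈ t.support) ∧
      ∀ a b : Fin 7, (a = w1 ∨ a = w2) → b ∈ c.support → G.Adj a b →
        s(a, b) ∈ t.edges := by
  rcases c with _ | @⟨_, x1, _, h1, p1⟩
  · simp at hlen
  rcases p1 with _ | @⟨_, x2, _, h2, p2⟩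
  · simp at hlen
  rcases p2 with _ | @⟨_, x3, _, h3, p3⟩
  · simp at hlen
  rcases p3 with _ | @⟨_, x4, _, h4, p4⟩
  · simp at hlen
  rcases p4 with _ | @⟨_, x5, _, h5, p5⟩
  · simp at hlen
  rcases p5 with _ | @⟨_, x6, _, h6, p6⟩
  rotate_left
  · exfalso; simp only [Walk.length_cons] at hlen; omega
  have hnd5 := hc.support_nodup
  simp only [Walk.support_cons, Walk.support_nil, List.tail_cons, List.nodup_cons,
    List.mem_cons, List.not_mem_nil, List.mem_singleton, or_false, not_or] at hnd5
  have hw1out : w1 ∉ _ := (hout w1).mpr (Or.inl rfl)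
  have hw2out : w2 ∉ _ := (hout w2).mpr (Or.inr rfl)
  simp only [Walk.mem_support_iff, Walk.support_cons, Walk.support_nil, List.mem_cons,
    List.not_mem_nil, or_false, not_or, List.mem_singleton] at hw1out hw2out
  have hnd : List.Nodup [v, x1, x2, x3, x4, w1, w2] := by
    simp only [List.nodup_cons, List.mem_cons, List.not_mem_nil, List.mem_singleton,
      or_false, not_or, List.nodup_nil, and_true]
    refine ⟨⟨?_,?_,?_,?_,?_,?_⟩,⟨?_,?_,?_,?_,?_⟩,⟨?_,?_,?_,?_⟩,⟨?_,?_,?_⟩,⟨?_,?_⟩,?_⟩ <;> tauto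
  have hndk := hnd
  simp only [List.nodup_cons, List.mem_cons, List.not_mem_nil, List.mem_singleton,
    or_false, not_or, List.nodup_nil, and_true] at hndk
  obtain ⟨⟨n01,n02,n03,n04,n05,n06⟩,⟨n12,n13,n14,n15,n16⟩,⟨n23,n24,n25,n26⟩,⟨n34,n35,n36⟩,⟨n45,n46⟩,n56⟩ := hndk
  have hcov : ∀ x : Fin 7, x = v ∨ x = x1 ∨ x = x2 ∨ x = x3 ∨ x = x4 ∨ x = w1 ∨ x = w2 := by
    intro x
    by_cases hx : x = w1 ∨ x = w2
    · tauto
    · have hxs : x ∈ (Walk.cons h1 (Walk.cons h2 (Walk.cons h3 (Walk.cons h4 (Walk.cons h5 Walk.nil))))).support := by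
        by_contra h
        exact hx ((hout x).mp h)
      simp only [Walk.support_cons, Walk.support_nil, List.mem_cons, List.not_mem_nil,
        or_false, List.mem_singleton] at hxs
      tauto
  obtain ⟨a1, b1, hne1, hS1⟩ := Set.ncard_eq_two.mp hn1
  obtain ⟨a2, b2, hne2, hS2⟩ := Set.ncard_eq_two.mp hn2
  have ha1 : a1 ∈ {u | u ∈ (Walk.cons h1 (Walk.cons h2 (Walk.cons h3 (Walk.cons h4 (Walk.cons h5 Walk.nil))))).support ∧ G.Adj w1 u} := by rw [hS1]; simp
  have hb1 : b1 ∈ {u | u ∈ (Walk.cons h1 (Walk.cons h2 (Walk.cons h3 (Walk.cons h4 (Walk.cons h5 Walk.nil))))).support ∧ G.Adj w1 u} := by rw [hS1]; simp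
  have ha2 : a2 ∈ {u | u ∈ (Walk.cons h1 (Walk.cons h2 (Walk.cons h3 (Walk.cons h4 (Walk.cons h5 Walk.nil))))).support ∧ G.Adj w2 u} := by rw [hS2]; simp
  have hb2 : b2 ∈ {u | u ∈ (Walk.cons h1 (Walk.cons h2 (Walk.cons h3 (Walk.cons h4 (Walk.cons h5 Walk.nil))))).support ∧ G.Adj w2 u} := by rw [hS2]; simp
  have hx1 : ∀ u, u ∈ (Walk.cons h1 (Walk.cons h2 (Walk.cons h3 (Walk.cons h4 (Walk.cons h5 Walk.nil))))).support → G.Adj w1 u → u = a1 ∨ u = b1 := by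
    intro u hu ha
    have : u ∈ {u | u ∈ (Walk.cons h1 (Walk.cons h2 (Walk.cons h3 (Walk.cons h4 (Walk.cons h5 Walk.nil))))).support ∧ G.Adj w1 u} := ⟨hu, ha⟩
    rw [hS1] at this
    simpa using this
  have hx2 : ∀ u, u ∈ (Walk.cons h1 (Walk.cons h2 (Walk.cons h3 (Walk.cons h4 (Walk.cons h5 Walk.nil))))).support → G.Adj w2 u → u = a2 ∨ u = b2 := by
    intro u hu ha
    have : u ∈ {u | u ∈ (Walk.cons h1 (Walk.cons h2 (Walk.cons h3 (Walk.cons h4 (Walk.cons h5 Walk.nil))))).support ∧ G.Adj w2 u} := ⟨hu, ha⟩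
    rw [hS2] at this
    simpa using this
  have ha1s : a1 = v ∨ a1 = x1 ∨ a1 = x2 ∨ a1 = x3 ∨ a1 = x4 := by
    have := ha1.1
    simp only [Walk.support_cons, Walk.support_nil, List.mem_cons, List.not_mem_nil,
      or_false, List.mem_singleton] at this
    clear * - this
    tauto
  have hb1s : b1 = v ∨ b1 = x1 ∨ b1 = x2 ∨ b1 = x3 ∨ b1 = x4 := by
    have := hb1.1
    simp only [Walk.support_cons, Walk.support_nil, List.mem_cons, List.not_mem_nil,
      or_false, List.mem_singleton] at this
    clear * - this
    tauto
  have ha2s : a2 = v ∨ a2 = x1 ∨ a2 = x2 ∨ a2 = x3 ∨ a2 = x4 := by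
    have := ha2.1
    simp only [Walk.support_cons, Walk.support_nil, List.mem_cons, List.not_mem_nil,
      or_false, List.mem_singleton] at this
    clear * - this
    tauto
  have hb2s : b2 = v ∨ b2 = x1 ∨ b2 = x2 ∨ b2 = x3 ∨ b2 = x4 := by
    have := hb2.1
    simp only [Walk.support_cons, Walk.support_nil, List.mem_cons, List.not_mem_nil,
      or_false, List.mem_singleton] at this
    clear * - this
    tauto
  have ea1 : G.Adj w1 a1 := ha1.2
  have eb1 : G.Adj w1 b1 := hb1.2
  have ea2 : G.Adj w2 a2 := ha2.2
  have eb2 : G.Adj w2 b2 := hb2.2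
  clear hc hn1 hn2 hS1 hS2 ha1 hb1 ha2 hb2 hnd5 hw1out hw2out hlen hnd
  have key : ∃ (t0 : Fin 7) (t : G.Walk t0 t0), t.IsTrail ∧ (∀ x : Fin 7, x ∈ t.support) ∧
      s(w1,a1) ∈ t.edges ∧ s(w1,b1) ∈ t.edges ∧ s(w2,a2) ∈ t.edges ∧ s(w2,b2) ∈ t.edges := by
    rcases ha1s with rfl|rfl|rfl|rfl|rfl
    · rcases hb1s with rfl|rfl|rfl|rfl|rfl
      · exact absurd rfl hne1
      · exact (tri htf ea1 h1 eb1).elim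
      · refine layer2 G htf _ _ _ _ _ _ _ _ _ ?_ ?_ h1 h2 h3 h4 h5 ea1 eb1 (by clear * - ha2s; tauto) (by clear * - hb2s; tauto) hne2 ea2 eb2
        · simp only [List.nodup_cons, List.mem_cons, List.not_mem_nil, List.mem_singleton, or_false, not_or, List.nodup_nil, and_true]
          refine ⟨⟨?_,?_,?_,?_,?_,?_⟩,⟨?_,?_,?_,?_,?_⟩,⟨?_,?_,?_,?_⟩,⟨?_,?_,?_⟩,⟨?_,?_⟩,?_⟩ <;> first | assumption | (apply Ne.symm; assumption)
        · intro x
          rcases hcov x with rfl|rfl|rfl|rfl|rfl|rfl|rfl <;> simp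
      · refine layer2 G htf _ _ _ _ _ _ _ _ _ ?_ ?_ h5.symm h4.symm h3.symm h2.symm h1.symm ea1 eb1 (by clear * - ha2s; tauto) (by clear * - hb2s; tauto) hne2 ea2 eb2
        · simp only [List.nodup_cons, List.mem_cons, List.not_mem_nil, List.mem_singleton, or_false, not_or, List.nodup_nil, and_true]
          refine ⟨⟨?_,?_,?_,?_,?_,?_⟩,⟨?_,?_,?_,?_,?_⟩,⟨?_,?_,?_,?_⟩,⟨?_,?_,?_⟩,⟨?_,?_⟩,?_⟩ <;> first | assumption | (apply Ne.symm; assumption)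
        · intro x
          rcases hcov x with rfl|rfl|rfl|rfl|rfl|rfl|rfl <;> simp
      · exact (tri htf eb1 h5 ea1).elim
    · rcases hb1s with rfl|rfl|rfl|rfl|rfl
      · exact (tri htf eb1 h1 ea1).elim
      · exact absurd rfl hne1
      · exact (tri htf ea1 h2 eb1).elim
      · refine layer2 G htf _ _ _ _ _ _ _ _ _ ?_ ?_ h2 h3 h4 h5 h1 ea1 eb1 (by clear * - ha2s; tauto) (by clear * - hb2s; tauto) hne2 ea2 eb2
        · simp only [List.nodup_cons, List.mem_cons, List.not_mem_nil, List.mem_singleton, or_false, not_or, List.nodup_nil, and_true]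
          refine ⟨⟨?_,?_,?_,?_,?_,?_⟩,⟨?_,?_,?_,?_,?_⟩,⟨?_,?_,?_,?_⟩,⟨?_,?_,?_⟩,⟨?_,?_⟩,?_⟩ <;> first | assumption | (apply Ne.symm; assumption)
        · intro x
          rcases hcov x with rfl|rfl|rfl|rfl|rfl|rfl|rfl <;> simp
      · refine layer2 G htf _ _ _ _ _ _ _ _ _ ?_ ?_ h1.symm h5.symm h4.symm h3.symm h2.symm ea1 eb1 (by clear * - ha2s; tauto) (by clear * - hb2s; tauto) hne2 ea2 eb2
        · simp only [List.nodup_cons, List.mem_cons, List.not_mem_nil, List.mem_singleton, or_false, not_or, List.nodup_nil, and_true]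
          refine ⟨⟨?_,?_,?_,?_,?_,?_⟩,⟨?_,?_,?_,?_,?_⟩,⟨?_,?_,?_,?_⟩,⟨?_,?_,?_⟩,⟨?_,?_⟩,?_⟩ <;> first | assumption | (apply Ne.symm; assumption)
        · intro x
          rcases hcov x with rfl|rfl|rfl|rfl|rfl|rfl|rfl <;> simp
    · rcases hb1s with rfl|rfl|rfl|rfl|rfl
      · refine layer2 G htf _ _ _ _ _ _ _ _ _ ?_ ?_ h2.symm h1.symm h5.symm h4.symm h3.symm ea1 eb1 (by clear * - ha2s; tauto) (by clear * - hb2s; tauto) hne2 ea2 eb2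
        · simp only [List.nodup_cons, List.mem_cons, List.not_mem_nil, List.mem_singleton, or_false, not_or, List.nodup_nil, and_true]
          refine ⟨⟨?_,?_,?_,?_,?_,?_⟩,⟨?_,?_,?_,?_,?_⟩,⟨?_,?_,?_,?_⟩,⟨?_,?_,?_⟩,⟨?_,?_⟩,?_⟩ <;> first | assumption | (apply Ne.symm; assumption)
        · intro x
          rcases hcov x with rfl|rfl|rfl|rfl|rfl|rfl|rfl <;> simp
      · exact (tri htf eb1 h2 ea1).elim
      · exact absurd rfl hne1
      · exact (tri htf ea1 h3 eb1).elim
      · refine layer2 G htf _ _ _ _ _ _ _ _ _ ?_ ?_ h3 h4 h5 h1 h2 ea1 eb1 (by clear * - ha2s; tauto) (by clear * - hb2s; tauto) hne2 ea2 eb2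
        · simp only [List.nodup_cons, List.mem_cons, List.not_mem_nil, List.mem_singleton, or_false, not_or, List.nodup_nil, and_true]
          refine ⟨⟨?_,?_,?_,?_,?_,?_⟩,⟨?_,?_,?_,?_,?_⟩,⟨?_,?_,?_,?_⟩,⟨?_,?_,?_⟩,⟨?_,?_⟩,?_⟩ <;> first | assumption | (apply Ne.symm; assumption)
        · intro x
          rcases hcov x with rfl|rfl|rfl|rfl|rfl|rfl|rfl <;> simp
    · rcases hb1s with rfl|rfl|rfl|rfl|rfl
      · refine layer2 G htf _ _ _ _ _ _ _ _ _ ?_ ?_ h4 h5 h1 h2 h3 ea1 eb1 (by clear * - ha2s; tauto) (by clear * - hb2s; tauto) hne2 ea2 eb2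
        · simp only [List.nodup_cons, List.mem_cons, List.not_mem_nil, List.mem_singleton, or_false, not_or, List.nodup_nil, and_true]
          refine ⟨⟨?_,?_,?_,?_,?_,?_⟩,⟨?_,?_,?_,?_,?_⟩,⟨?_,?_,?_,?_⟩,⟨?_,?_,?_⟩,⟨?_,?_⟩,?_⟩ <;> first | assumption | (apply Ne.symm; assumption)
        · intro x
          rcases hcov x with rfl|rfl|rfl|rfl|rfl|rfl|rfl <;> simp
      · refine layer2 G htf _ _ _ _ _ _ _ _ _ ?_ ?_ h3.symm h2.symm h1.symm h5.symm h4.symm ea1 eb1 (by clear * - ha2s; tauto) (by clear * - hb2s; tauto) hne2 ea2 eb2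
        · simp only [List.nodup_cons, List.mem_cons, List.not_mem_nil, List.mem_singleton, or_false, not_or, List.nodup_nil, and_true]
          refine ⟨⟨?_,?_,?_,?_,?_,?_⟩,⟨?_,?_,?_,?_,?_⟩,⟨?_,?_,?_,?_⟩,⟨?_,?_,?_⟩,⟨?_,?_⟩,?_⟩ <;> first | assumption | (apply Ne.symm; assumption)
        · intro x
          rcases hcov x with rfl|rfl|rfl|rfl|rfl|rfl|rfl <;> simp
      · exact (tri htf eb1 h3 ea1).elim
      · exact absurd rfl hne1
      · exact (tri htf ea1 h4 eb1).elim
    · rcases hb1s with rfl|rfl|rfl|rfl|rfl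
      · exact (tri htf ea1 h5 eb1).elim
      · refine layer2 G htf _ _ _ _ _ _ _ _ _ ?_ ?_ h5 h1 h2 h3 h4 ea1 eb1 (by clear * - ha2s; tauto) (by clear * - hb2s; tauto) hne2 ea2 eb2
        · simp only [List.nodup_cons, List.mem_cons, List.not_mem_nil, List.mem_singleton, or_false, not_or, List.nodup_nil, and_true]
          refine ⟨⟨?_,?_,?_,?_,?_,?_⟩,⟨?_,?_,?_,?_,?_⟩,⟨?_,?_,?_,?_⟩,⟨?_,?_,?_⟩,⟨?_,?_⟩,?_⟩ <;> first | assumption | (apply Ne.symm; assumption)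
        · intro x
          rcases hcov x with rfl|rfl|rfl|rfl|rfl|rfl|rfl <;> simp
      · refine layer2 G htf _ _ _ _ _ _ _ _ _ ?_ ?_ h4.symm h3.symm h2.symm h1.symm h5.symm ea1 eb1 (by clear * - ha2s; tauto) (by clear * - hb2s; tauto) hne2 ea2 eb2
        · simp only [List.nodup_cons, List.mem_cons, List.not_mem_nil, List.mem_singleton, or_false, not_or, List.nodup_nil, and_true]
          refine ⟨⟨?_,?_,?_,?_,?_,?_⟩,⟨?_,?_,?_,?_,?_⟩,⟨?_,?_,?_,?_⟩,⟨?_,?_,?_⟩,⟨?_,?_⟩,?_⟩ <;> first | assumption | (apply Ne.symm; assumption)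
        · intro x
          rcases hcov x with rfl|rfl|rfl|rfl|rfl|rfl|rfl <;> simp
      · exact (tri htf eb1 h4 ea1).elim
      · exact absurd rfl hne1
  obtain ⟨t0, t, ht, hsp, k1, k2, k3, k4⟩ := key
  refine ⟨t0, t, ht, hsp, ?_⟩
  intro a b hab hbs hadj
  rcases hab with rfl|rfl
  · rcases hx1 b hbs hadj with rfl|rfl
    · exact k1
    · exact k2
  · rcases hx2 b hbs hadj with rfl|rfl
    · exact k3
    · exact k4
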